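/- The characteristic function of the set E of legal it-codewords over the alphabet {l, r, m, f, t} is computable by a Turing machine in polynomial time: the function sending a word w ∈ {l, r, m, f, t}* to the Boolean value 'w ∈ E' is computable in time bounded by a polynomial in the length of w. -/

import Mathlib

/-- The alphabet Σ = {l, r, m, f, t} of the it-encoding. -/
inductive ITLetter : Type
  | l | r | m | f | t
  deriving DecidableEq

instance : Fintype ITLetter :=
  ⟨⟨[ITLetter.l, ITLetter.r, ITLetter.m, ITLetter.f, ITLetter.t], by decide⟩,
    fun x => by cases x <;> decide⟩

/-- Replace the `s`-th open slot (`none`, numbered from the left starting at 1)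
of a list over `ℕ ∪ {⋄}` by the given replacement list. -/
def replaceSlot : List (Option ℕ) → ℕ → List (Option ℕ) → List (Option ℕ)
  | [], _, _ => []
  | none :: xs, s, repl => if s ≤ 1 then repl ++ xs else none :: replaceSlot xs (s - 1) repl
  | some a :: xs, s, repl => some a :: replaceSlot xs s repl

/-- One step of the it-decoding: the state is (current list, next entry i, next slot s). -/
def itStep : (List (Option ℕ) × ℕ × ℕ) → ITLetter → (List (Option ℕ) × ℕ × ℕ)
  | (p, i, s), .t => (p, i, s + 1)
  | (p, i, s), .l => (replaceSlot p s [some i, none], i + 1, 1)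
  | (p, i, s), .r => (replaceSlot p s [none, some i], i + 1, 1)
  | (p, i, s), .m => (replaceSlot p s [none, some i, none], i + 1, 1)
  | (p, i, s), .f => (replaceSlot p s [some i], i + 1, 1)

/-- Run the it-decoding on a word, starting from the list [⋄], i = 1, s = 1. -/
def itRun (w : List ITLetter) : List (Option ℕ) × ℕ × ℕ :=
  w.foldl itStep ([none], 1, 1)

/-- The decoded permutation of a word: the final list (with slots removed). -/
def itDecode (w : List ITLetter) : List ℕ :=
  (itRun w).1.reduceOption

/-- The number of `t` letters at the end of a word (the `t`s immediately
preceding the next letter). -/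
def trailingT (w : List ITLetter) : ℕ :=
  (w.reverse.takeWhile (· = ITLetter.t)).length

/-- A word is a legal it-codeword if it ends with `f`, each non-`t` letter is
immediately preceded by at most (#m − #f) letters `t` (counted in the prefix
before it), and the final list contains no open slot. -/
def ITLegal (w : List ITLetter) : Prop :=
  w.getLast? = some ITLetter.f ∧
  (∀ j : Fin w.length, w.get j ≠ ITLetter.t →
    (trailingT (w.take j) : ℤ) ≤
      ((w.take j).count ITLetter.m : ℤ) - ((w.take j).count ITLetter.f : ℤ)) ∧
  none ∉ (itRun w).1

instance : DecidablePred ITLegal := fun w => by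
  unfold ITLegal; infer_instance

/-- The trivial finite encoding of words over the it-alphabet. -/
def itFinEncoding : Computability.Encoding (List ITLetter) ITLetter where
  encode := id
  decode := fun l => some l
  decode_encode := fun _ => rfl

namespace ITProof

open ITLetter

/-- Abstract one-counter automaton deciding legality: `c` is the remaining
allowance (#m − #f of processed prefix minus current trailing-`t` count `k`). -/
def loop : List ITLetter → ℕ → ℕ → Bool
  | [], _, _ => false
  | .t :: rest, c, k => if c = 0 then false else loop rest (c - 1) (k + 1)
  | .m :: rest, c, k => loop rest (c + k + 1) 0
  | .l :: rest, c, k => loop rest (c + k) 0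
  | .r :: rest, c, k => loop rest (c + k) 0
  | .f :: rest, c, k => if c + k = 0 then rest.isEmpty else loop rest (c + k - 1) 0

lemma count_none_replaceSlot (repl : List (Option ℕ)) :
    ∀ (p : List (Option ℕ)) (s : ℕ), 1 ≤ s → s ≤ p.count none →
      (replaceSlot p s repl).count none + 1 = p.count none + repl.count none := by
  intro p
  induction p with
  | nil => intro s h1 h2; simp at h2; omega
  | cons a xs ih =>
    intro s h1 h2
    match a with
    | none =>
      by_cases hs : s ≤ 1
      · simp [replaceSlot, hs, List.count_cons, List.count_append]
        omega
      · have h2' : s - 1 ≤ xs.count none := by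
          simp [List.count_cons] at h2; omega
        have := ih (s - 1) (by omega) h2'
        simp [replaceSlot, hs, List.count_cons]
        omega
    | some b =>
      have h2' : s ≤ xs.count none := by simpa [List.count_cons] using h2
      have := ih s h1 h2'
      simp [replaceSlot, List.count_cons]
      omega

lemma itRun_concat (u : List ITLetter) (x : ITLetter) :
    itRun (u ++ [x]) = itStep (itRun u) x := by
  simp [itRun, List.foldl_concat]

lemma takeWhile_append_all {α : Type*} (p : α → Bool) (l₁ l₂ : List α)
    (h : ∀ x ∈ l₁, p x = true) :
    (l₁ ++ l₂).takeWhile p = l₁ ++ l₂.takeWhile p := by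
  induction l₁ with
  | nil => simp
  | cons a l ih =>
    have ha := h a (by simp)
    simp [List.takeWhile_cons, ha]
    exact ih fun x hx => h x (by simp [hx])

lemma trailingT_append_all (u a : List ITLetter) (ha : ∀ x ∈ a, x = ITLetter.t) :
    trailingT (u ++ a) = trailingT u + a.length := by
  unfold trailingT
  rw [List.reverse_append]
  rw [takeWhile_append_all _ _ _ (by intro x hx; simp at hx ⊢; exact ha x hx)]
  simp [Nat.add_comm]

lemma trailingT_concat_t (u : List ITLetter) :
    trailingT (u ++ [ITLetter.t]) = trailingT u + 1 := by
  simpa using trailingT_append_all u [ITLetter.t] (by simp)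

lemma trailingT_concat_ne (u : List ITLetter) (x : ITLetter) (hx : x ≠ ITLetter.t) :
    trailingT (u ++ [x]) = 0 := by
  unfold trailingT
  rw [List.reverse_append]
  simp [List.takeWhile_cons, hx]

lemma trailingT_eq_zero_of_getLast (u : List ITLetter) (x : ITLetter)
    (hx : x ≠ ITLetter.t) (h : u.getLast? = some x) : trailingT u = 0 := by
  rw [← List.head?_reverse] at h
  unfold trailingT
  cases hrev : u.reverse with
  | nil => simp
  | cons a l =>
    rw [hrev] at h
    simp at h
    subst h
    simp [List.takeWhile_cons, hx]

lemma count_eq_zero_all_t (a : List ITLetter) (ha : ∀ x ∈ a, x = ITLetter.t)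
    (y : ITLetter) (hy : y ≠ ITLetter.t) : a.count y = 0 := by
  rw [List.count_eq_zero]
  intro hmem
  exact hy (ha y hmem)

/-- If the prefix `u` already violates the trailing-`t` condition, then no
extension `u ++ r` (with `r` nonempty) is legal. -/
lemma not_legal_of_bad (u r : List ITLetter) (hr : r ≠ [])
    (hbad : ((u.count ITLetter.m : ℤ) - u.count ITLetter.f) < trailingT u) :
    ¬ ITLegal (u ++ r) := by
  intro ⟨h1, h2, _⟩
  have hall : ∀ x ∈ r.takeWhile (fun x => x = ITLetter.t), x = ITLetter.t := by
    intro x hx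
    simpa using List.mem_takeWhile_imp hx
  cases hb : r.dropWhile (fun x => x = ITLetter.t) with
  | nil =>
    -- r is all t's, so the word ends in t, contradicting h1
    have hallr : ∀ x ∈ r, x = ITLetter.t := by
      intro x hx
      simpa using List.dropWhile_eq_nil_iff.mp hb x hx
    have hlast : (u ++ r).getLast? = r.getLast? := List.getLast?_append_of_ne_nil _ hr
    have : r.getLast? = some ITLetter.t := by
      match r, hr with
      | x :: r', _ =>
        have hmem : (x :: r').getLast (by simp) ∈ x :: r' := List.getLast_mem _
        rw [List.getLast?_eq_getLast (by simp)]
        exact congrArg some (hallr _ hmem)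
    rw [hlast, this] at h1
    simp at h1
  | cons x b' =>
    have hxt : x ≠ ITLetter.t := by
      have := List.head?_dropWhile_not (fun x => decide (x = ITLetter.t)) r
      rw [hb] at this
      simpa using this
    obtain ⟨a, hall2, hab⟩ : ∃ a, (∀ y ∈ a, y = ITLetter.t) ∧ a ++ x :: b' = r :=
      ⟨r.takeWhile (fun x => x = ITLetter.t), hall, by
        rw [← hb]; exact List.takeWhile_append_dropWhile⟩
    subst hab
    rw [show u ++ (a ++ x :: b') = (u ++ a) ++ x :: b' from by simp] at h2
    have hjlt : (u ++ a).length < ((u ++ a) ++ x :: b').length := by simp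
    have hget : ((u ++ a) ++ x :: b').get ⟨(u ++ a).length, hjlt⟩ = x := by
      simp only [List.get_eq_getElem]
      rw [List.getElem_append_right (le_refl _)]
      simp
    have htake : ((u ++ a) ++ x :: b').take (u ++ a).length = u ++ a :=
      List.take_left
    have := h2 ⟨(u ++ a).length, hjlt⟩ (by rw [hget]; exact hxt)
    simp only [htake] at this
    have hall := hall2
    rw [trailingT_append_all u a hall] at this
    rw [List.count_append, List.count_append] at this
    rw [count_eq_zero_all_t a hall ITLetter.m (by simp),
        count_eq_zero_all_t a hall ITLetter.f (by simp)] at this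
    push_cast at this
    omega

lemma cond2_extend (u : List ITLetter) (x : ITLetter)
    (h2 : ∀ j : Fin u.length, u.get j ≠ ITLetter.t →
      (trailingT (u.take j) : ℤ) ≤
        ((u.take j).count ITLetter.m : ℤ) - ((u.take j).count ITLetter.f : ℤ))
    (hx : x ≠ ITLetter.t →
      (trailingT u : ℤ) ≤ (u.count ITLetter.m : ℤ) - (u.count ITLetter.f : ℤ)) :
    ∀ j : Fin (u ++ [x]).length, (u ++ [x]).get j ≠ ITLetter.t →
      (trailingT ((u ++ [x]).take j) : ℤ) ≤
        (((u ++ [x]).take j).count ITLetter.m : ℤ) -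
          (((u ++ [x]).take j).count ITLetter.f : ℤ) := by
  intro j hj
  rcases lt_or_eq_of_le (Nat.lt_succ_iff.mp (by simpa using j.isLt)) with hlt | heq
  · have htake : (u ++ [x]).take j = u.take j := List.take_append_of_le_length (le_of_lt hlt)
    have hget : (u ++ [x]).get j = u.get ⟨j, hlt⟩ := by
      simp only [List.get_eq_getElem]
      exact List.getElem_append_left hlt
    rw [htake]
    exact h2 ⟨j, hlt⟩ (hget ▸ hj)
  · have htake : (u ++ [x]).take j = u := by
      rw [show (j : ℕ) = u.length from heq]; exact List.take_left
    have hget : (u ++ [x]).get j = x := by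
      simp only [List.get_eq_getElem]
      exact List.getElem_concat_length heq _
    rw [htake]
    exact hx (hget ▸ hj)

/-- The main invariant lemma: `loop` correctly decides legality. -/
lemma loop_correct : ∀ (rest u : List ITLetter) (c k : ℕ),
    trailingT u = k →
    u.count ITLetter.m = u.count ITLetter.f + k + c →
    (∀ j : Fin u.length, u.get j ≠ ITLetter.t →
      (trailingT (u.take j) : ℤ) ≤
        ((u.take j).count ITLetter.m : ℤ) - ((u.take j).count ITLetter.f : ℤ)) →
    (itRun u).1.count none = c + k + 1 →
    (itRun u).2.2 = k + 1 →
    (loop rest c k = true ↔ ITLegal (u ++ rest)) := by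
  intro rest
  induction rest with
  | nil =>
    intro u c k hk hcount h2 hnone hs
    rw [List.append_nil]
    simp only [loop, Bool.false_eq_true, false_iff]
    intro ⟨h1, _, h3⟩
    have hk0 : trailingT u = 0 :=
      trailingT_eq_zero_of_getLast u ITLetter.f (by simp) h1
    have : 0 < (itRun u).1.count none := by omega
    exact h3 (List.count_pos_iff.mp this)
  | cons x rest' ih =>
    intro u c k hk hcount h2 hnone hs
    rcases hru : itRun u with ⟨p, i, s⟩
    rw [hru] at hnone hs
    simp only at hnone hs
    cases x with
    | t =>
      by_cases hc : c = 0
      · subst hc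
        rw [show loop (ITLetter.t :: rest') 0 k = false from by simp [loop]]
        simp only [Bool.false_eq_true, false_iff]
        rw [show u ++ (ITLetter.t :: rest') = (u ++ [ITLetter.t]) ++ rest' from by simp]
        cases rest' with
        | nil =>
          intro ⟨h1, _, _⟩
          rw [List.append_nil, List.getLast?_concat] at h1
          simp at h1
        | cons y rest'' =>
          apply not_legal_of_bad _ _ (by simp)
          rw [trailingT_concat_t, hk]
          simp only [List.count_append]
          have e1 : List.count ITLetter.m [ITLetter.t] = 0 := by decide
          have e2 : List.count ITLetter.f [ITLetter.t] = 0 := by decide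
          rw [e1, e2]
          push_cast
          omega
      · rw [show loop (ITLetter.t :: rest') c k = loop rest' (c - 1) (k + 1) from by
            simp [loop, hc],
          show u ++ (ITLetter.t :: rest') = (u ++ [ITLetter.t]) ++ rest' from by simp]
        apply ih (u ++ [ITLetter.t]) (c - 1) (k + 1)
        · rw [trailingT_concat_t, hk]
        · simp only [List.count_append]
          have e1 : List.count ITLetter.m [ITLetter.t] = 0 := by decide
          have e2 : List.count ITLetter.f [ITLetter.t] = 0 := by decide
          rw [e1, e2]
          omega
        · exact cond2_extend u ITLetter.t h2 (fun h => absurd rfl h)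
        · rw [itRun_concat, hru]
          simp only [itStep]
          omega
        · rw [itRun_concat, hru]
          simp only [itStep]
          omega
    | m =>
      rw [show loop (ITLetter.m :: rest') c k = loop rest' (c + k + 1) 0 from rfl,
        show u ++ (ITLetter.m :: rest') = (u ++ [ITLetter.m]) ++ rest' from by simp]
      have hrepl := count_none_replaceSlot [none, some i, none] p s (by omega) (by omega)
      apply ih (u ++ [ITLetter.m]) (c + k + 1) 0
      · exact trailingT_concat_ne u _ (by simp)
      · simp only [List.count_append]
        have e1 : List.count ITLetter.m [ITLetter.m] = 1 := by decide
        have e2 : List.count ITLetter.f [ITLetter.m] = 0 := by decide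
        rw [e1, e2]
        omega
      · refine cond2_extend u ITLetter.m h2 (fun _ => ?_)
        rw [hk]
        push_cast
        omega
      · rw [itRun_concat, hru]
        simp only [itStep]
        simp at hrepl
        omega
      · rw [itRun_concat, hru]
        simp [itStep]
    | l =>
      rw [show loop (ITLetter.l :: rest') c k = loop rest' (c + k) 0 from rfl,
        show u ++ (ITLetter.l :: rest') = (u ++ [ITLetter.l]) ++ rest' from by simp]
      have hrepl := count_none_replaceSlot [some i, none] p s (by omega) (by omega)
      apply ih (u ++ [ITLetter.l]) (c + k) 0
      · exact trailingT_concat_ne u _ (by simp)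
      · simp only [List.count_append]
        have e1 : List.count ITLetter.m [ITLetter.l] = 0 := by decide
        have e2 : List.count ITLetter.f [ITLetter.l] = 0 := by decide
        rw [e1, e2]
        omega
      · refine cond2_extend u ITLetter.l h2 (fun _ => ?_)
        rw [hk]
        push_cast
        omega
      · rw [itRun_concat, hru]
        simp only [itStep]
        simp at hrepl
        omega
      · rw [itRun_concat, hru]
        simp [itStep]
    | r =>
      rw [show loop (ITLetter.r :: rest') c k = loop rest' (c + k) 0 from rfl,
        show u ++ (ITLetter.r :: rest') = (u ++ [ITLetter.r]) ++ rest' from by simp]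
      have hrepl := count_none_replaceSlot [none, some i] p s (by omega) (by omega)
      apply ih (u ++ [ITLetter.r]) (c + k) 0
      · exact trailingT_concat_ne u _ (by simp)
      · simp only [List.count_append]
        have e1 : List.count ITLetter.m [ITLetter.r] = 0 := by decide
        have e2 : List.count ITLetter.f [ITLetter.r] = 0 := by decide
        rw [e1, e2]
        omega
      · refine cond2_extend u ITLetter.r h2 (fun _ => ?_)
        rw [hk]
        push_cast
        omega
      · rw [itRun_concat, hru]
        simp only [itStep]
        simp at hrepl
        omega
      · rw [itRun_concat, hru]
        simp [itStep]
    | f =>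
      have hrepl := count_none_replaceSlot [some i] p s (by omega) (by omega)
      by_cases hck : c + k = 0
      · cases rest' with
        | nil =>
          rw [show loop [ITLetter.f] c k = true from by simp [loop, hck]]
          simp only [true_iff, List.append_nil]
          refine ⟨List.getLast?_concat, ?_, ?_⟩
          · refine cond2_extend u ITLetter.f h2 (fun _ => ?_)
            rw [hk]
            push_cast
            omega
          · rw [itRun_concat, hru]
            simp only [itStep]
            intro hmem
            have : 0 < (replaceSlot p s [some i]).count none :=
              List.count_pos_iff.mpr hmem
            simp at hrepl
            omega
        | cons y rest'' =>
          rw [show loop (ITLetter.f :: y :: rest'') c k = false from by simp [loop, hck]]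
          simp only [Bool.false_eq_true, false_iff]
          rw [show u ++ (ITLetter.f :: y :: rest'') = (u ++ [ITLetter.f]) ++ (y :: rest'')
              from by simp]
          apply not_legal_of_bad _ _ (by simp)
          rw [trailingT_concat_ne u _ (by simp)]
          simp only [List.count_append]
          have e1 : List.count ITLetter.m [ITLetter.f] = 0 := by decide
          have e2 : List.count ITLetter.f [ITLetter.f] = 1 := by decide
          rw [e1, e2]
          push_cast
          omega
      · rw [show loop (ITLetter.f :: rest') c k = loop rest' (c + k - 1) 0 from by
            simp [loop, hck]; intro h1 h2; omega,
          show u ++ (ITLetter.f :: rest') = (u ++ [ITLetter.f]) ++ rest' from by simp]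
        apply ih (u ++ [ITLetter.f]) (c + k - 1) 0
        · exact trailingT_concat_ne u _ (by simp)
        · simp only [List.count_append]
          have e1 : List.count ITLetter.m [ITLetter.f] = 0 := by decide
          have e2 : List.count ITLetter.f [ITLetter.f] = 1 := by decide
          rw [e1, e2]
          omega
        · refine cond2_extend u ITLetter.f h2 (fun _ => ?_)
          rw [hk]
          push_cast
          omega
        · rw [itRun_concat, hru]
          simp only [itStep]
          simp at hrepl
          omega
        · rw [itRun_concat, hru]
          simp [itStep]

theorem legal_eq_loop (w : List ITLetter) : decide (ITLegal w) = loop w 0 0 := by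
  have := loop_correct w [] 0 0 (by rfl) (by simp) (by intro j; exact absurd j.isLt (by simp))
    (by simp [itRun]) (by simp [itRun])
  simp only [List.nil_append] at this
  by_cases hl : ITLegal w
  · simp [hl, this.mpr hl]
  · have hf : loop w 0 0 = false := by
      cases hq : loop w 0 0
      · rfl
      · exact absurd (this.mp hq) hl
    simp [hl, hf]

/-! ### The Turing machine -/

open Turing Turing.TM2 Turing.TM2.Stmt

/-- Stack indices: input, output, counter stack, trailing-t stack. -/
inductive MK : Type
  | inp | out | cs | ts
  deriving DecidableEq

instance : Fintype MK :=
  ⟨⟨[MK.inp, MK.out, MK.cs, MK.ts], by decide⟩, fun x => by cases x <;> decide⟩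

/-- Stack alphabets. -/
abbrev MG : MK → Type
  | .inp => ITLetter
  | .out => Bool
  | .cs => Unit
  | .ts => Unit

/-- Machine labels. -/
inductive ML : Type
  | main | restore | clean
  deriving DecidableEq

instance : Fintype ML :=
  ⟨⟨[ML.main, ML.restore, ML.clean], by decide⟩, fun x => by cases x <;> decide⟩

/-- Machine internal state. -/
abbrev MS : Type := Option ITLetter × Bool

/-- Initial internal state. -/
def v0 : MS := (none, true)

/-- The program. -/
def prog : ML → Stmt MG ML MS
  | .main =>
    pop .inp (fun _ o => (o, true)) <|
    branch (fun s => s.1.isSome)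
      (branch (fun s => s.1 = some ITLetter.t)
        (pop .cs (fun s o => (s.1, o.isSome)) <|
         branch (fun s => s.2)
           (push .ts (fun _ => ()) <| load (fun _ => v0) <| goto fun _ => .main)
           (load (fun _ => v0) <| goto fun _ => .clean))
        (load (fun s => (s.1, true)) <| goto fun _ => .restore))
      (load (fun _ => v0) <| goto fun _ => .clean)
  | .restore =>
    pop .ts (fun s o => (s.1, o.isSome)) <|
    branch (fun s => s.2)
      (push .cs (fun _ => ()) <| load (fun s => (s.1, true)) <| goto fun _ => .restore)
      (branch (fun s => s.1 = some ITLetter.m)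
        (push .cs (fun _ => ()) <| load (fun _ => v0) <| goto fun _ => .main)
        (branch (fun s => s.1 = some ITLetter.f)
          (pop .cs (fun s o => (s.1, o.isSome)) <|
           branch (fun s => s.2)
             (load (fun _ => v0) <| goto fun _ => .main)
             (pop .inp (fun _ o => (o, true)) <|
              branch (fun s => s.1.isSome)
                (load (fun _ => v0) <| goto fun _ => .clean)
                (load (fun _ => v0) <| push .out (fun _ => true) <| halt)))
          (load (fun _ => v0) <| goto fun _ => .main)))
  | .clean =>
    pop .inp (fun _ o => ((none : Option ITLetter), o.isSome)) <|
    pop .cs (fun s o => (s.1, s.2 || o.isSome)) <|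
    pop .ts (fun s o => (s.1, s.2 || o.isSome)) <|
    branch (fun s => s.2)
      (load (fun _ => v0) <| goto fun _ => .clean)
      (load (fun _ => v0) <| push .out (fun _ => false) <| halt)

/-- The bundled machine. -/
def itTM : FinTM2 where
  K := MK
  k₀ := .inp
  k₁ := .out
  Γ := MG
  Λ := ML
  main := .main
  σ := MS
  initialState := v0
  Γk₀Fin := inferInstanceAs (Fintype ITLetter)
  m := prog

/-- Stack contents: input word, counter value, trailing-t value, output. -/
def stks (i : List ITLetter) (c t : ℕ) (o : List Bool) : ∀ k : MK, List (MG k)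
  | .inp => i
  | .out => o
  | .cs => List.replicate c ()
  | .ts => List.replicate t ()

def cfgMain (i : List ITLetter) (c t : ℕ) : Cfg MG ML MS :=
  ⟨some .main, v0, stks i c t []⟩

def cfgRestore (x : ITLetter) (i : List ITLetter) (c t : ℕ) : Cfg MG ML MS :=
  ⟨some .restore, (some x, true), stks i c t []⟩

def cfgClean (i : List ITLetter) (c t : ℕ) : Cfg MG ML MS :=
  ⟨some .clean, v0, stks i c t []⟩

def cfgHalt (b : Bool) : Cfg MG ML MS :=
  ⟨none, v0, stks [] 0 0 [b]⟩

lemma stks_update_inp (i : List ITLetter) (c t : ℕ) (o : List Bool) (i' : List ITLetter) :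
    Function.update (stks i c t o) MK.inp i' = stks i' c t o := by
  funext k; cases k <;> simp [Function.update, stks]

lemma stks_update_out (i : List ITLetter) (c t : ℕ) (o : List Bool) (o' : List Bool) :
    Function.update (stks i c t o) MK.out o' = stks i c t o' := by
  funext k; cases k <;> simp [Function.update, stks]

lemma unit_list_eq (l : List Unit) : l = List.replicate l.length () :=
  List.eq_replicate_of_mem (fun _ _ => rfl)

lemma stks_update_cs (i : List ITLetter) (c t : ℕ) (o : List Bool) (l : List Unit) :
    Function.update (stks i c t o) MK.cs l = stks i l.length t o := by
  funext k
  cases k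
  · simp [Function.update, stks]
  · simp [Function.update, stks]
  · simpa [Function.update, stks] using unit_list_eq l
  · simp [Function.update, stks]

lemma stks_update_ts (i : List ITLetter) (c t : ℕ) (o : List Bool) (l : List Unit) :
    Function.update (stks i c t o) MK.ts l = stks i c l.length o := by
  funext k
  cases k
  · simp [Function.update, stks]
  · simp [Function.update, stks]
  · simp [Function.update, stks]
  · simpa [Function.update, stks] using unit_list_eq l

/-- The step function of the machine. -/
abbrev mstep : Cfg MG ML MS → Option (Cfg MG ML MS) := TM2.step prog

lemma stks_inp (i c t o) : stks i c t o MK.inp = i := rfl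
lemma stks_out (i c t o) : stks i c t o MK.out = o := rfl
lemma stks_cs (i c t o) : stks i c t o MK.cs = List.replicate c () := rfl
lemma stks_ts (i c t o) : stks i c t o MK.ts = List.replicate t () := rfl

lemma step_main_nil (c t : ℕ) : mstep (cfgMain [] c t) = some (cfgClean [] c t) := by
  simp [cfgMain, cfgClean, prog, stks_inp, stks_cs, stks_ts,
    stks_update_inp, stks_update_cs, stks_update_ts, stks_update_out]

lemma step_main_t_pos (rest : List ITLetter) (c t : ℕ) :
    mstep (cfgMain (ITLetter.t :: rest) (c + 1) t) = some (cfgMain rest c (t + 1)) := by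
  simp [cfgMain, prog, stks_inp, stks_cs, stks_ts, List.replicate_succ,
    stks_update_inp, stks_update_cs, stks_update_ts, stks_update_out, v0]

lemma step_main_t_zero (rest : List ITLetter) (t : ℕ) :
    mstep (cfgMain (ITLetter.t :: rest) 0 t) = some (cfgClean rest 0 t) := by
  simp [cfgMain, cfgClean, prog, stks_inp, stks_cs, stks_ts,
    stks_update_inp, stks_update_cs, stks_update_ts, stks_update_out, v0]

lemma step_main_letter (x : ITLetter) (rest : List ITLetter) (c t : ℕ)
    (hx : x ≠ ITLetter.t) :
    mstep (cfgMain (x :: rest) c t) = some (cfgRestore x rest c t) := by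
  simp [cfgMain, cfgRestore, prog, stks_inp, stks_cs, stks_ts, hx,
    stks_update_inp, stks_update_cs, stks_update_ts, stks_update_out, v0]

lemma step_restore_pos (x : ITLetter) (rest : List ITLetter) (c t : ℕ) :
    mstep (cfgRestore x rest c (t + 1)) = some (cfgRestore x rest (c + 1) t) := by
  simp [cfgRestore, prog, stks_inp, stks_cs, stks_ts, List.replicate_succ,
    stks_update_inp, stks_update_cs, stks_update_ts, stks_update_out, v0]

lemma step_restore_m (rest : List ITLetter) (c : ℕ) :
    mstep (cfgRestore ITLetter.m rest c 0) = some (cfgMain rest (c + 1) 0) := by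
  simp [cfgRestore, cfgMain, prog, stks_inp, stks_cs, stks_ts, List.replicate_succ,
    stks_update_inp, stks_update_cs, stks_update_ts, stks_update_out, v0]

lemma step_restore_l (rest : List ITLetter) (c : ℕ) :
    mstep (cfgRestore ITLetter.l rest c 0) = some (cfgMain rest c 0) := by
  simp [cfgRestore, cfgMain, prog, stks_inp, stks_cs, stks_ts,
    stks_update_inp, stks_update_cs, stks_update_ts, stks_update_out, v0]

lemma step_restore_r (rest : List ITLetter) (c : ℕ) :
    mstep (cfgRestore ITLetter.r rest c 0) = some (cfgMain rest c 0) := by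
  simp [cfgRestore, cfgMain, prog, stks_inp, stks_cs, stks_ts,
    stks_update_inp, stks_update_cs, stks_update_ts, stks_update_out, v0]

lemma step_restore_f_pos (rest : List ITLetter) (c : ℕ) :
    mstep (cfgRestore ITLetter.f rest (c + 1) 0) = some (cfgMain rest c 0) := by
  simp [cfgRestore, cfgMain, prog, stks_inp, stks_cs, stks_ts, List.replicate_succ,
    stks_update_inp, stks_update_cs, stks_update_ts, stks_update_out, v0]

lemma step_restore_f_zero_nil :
    mstep (cfgRestore ITLetter.f [] 0 0) = some (cfgHalt true) := by
  simp [cfgRestore, cfgHalt, prog, stks_inp, stks_cs, stks_ts, stks_out,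
    stks_update_inp, stks_update_cs, stks_update_ts, stks_update_out, v0]

lemma step_restore_f_zero_cons (y : ITLetter) (rest : List ITLetter) :
    mstep (cfgRestore ITLetter.f (y :: rest) 0 0) = some (cfgClean rest 0 0) := by
  simp [cfgRestore, cfgClean, prog, stks_inp, stks_cs, stks_ts,
    stks_update_inp, stks_update_cs, stks_update_ts, stks_update_out, v0]

lemma step_clean_done : mstep (cfgClean [] 0 0) = some (cfgHalt false) := by
  simp [cfgClean, cfgHalt, prog, stks_inp, stks_cs, stks_ts, stks_out,
    stks_update_inp, stks_update_cs, stks_update_ts, stks_update_out, v0]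

lemma step_clean_go (i : List ITLetter) (c t : ℕ) (h : ¬(i = [] ∧ c = 0 ∧ t = 0)) :
    mstep (cfgClean i c t) = some (cfgClean i.tail (c - 1) (t - 1)) := by
  have hcond : (i.head?.isSome || (List.replicate c ()).head?.isSome
      || (List.replicate t ()).head?.isSome) = true := by
    rcases i with _ | ⟨y, i'⟩ <;> rcases c with _ | c <;> rcases t with _ | t <;>
      simp_all [List.replicate_succ]
  have htail : (List.replicate c ()).tail = List.replicate (c - 1) () := by
    rcases c with _ | c <;> simp [List.replicate_succ]
  have htail2 : (List.replicate t ()).tail = List.replicate (t - 1) () := by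
    rcases t with _ | t <;> simp [List.replicate_succ]
  simp [cfgClean, prog, stks_inp, stks_cs, stks_ts, stks_out, htail, htail2, hcond,
    stks_update_inp, stks_update_cs, stks_update_ts, stks_update_out, v0]

/-- `P n a b`: from configuration `a` the machine reaches `b` in exactly `n` steps. -/
def P (n : ℕ) (a b : Cfg MG ML MS) : Prop :=
  (flip bind mstep)^[n] (some a) = some b

lemma P_refl (a : Cfg MG ML MS) : P 0 a a := rfl

lemma P_step {a a' b : Cfg MG ML MS} {n : ℕ} (h : mstep a = some a') (hp : P n a' b) :
    P (n + 1) a b := by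
  unfold P at hp ⊢
  rw [Function.iterate_add_apply]
  simpa [flip, h] using hp

lemma P_trans {a b c' : Cfg MG ML MS} {n m : ℕ} (h1 : P n a b) (h2 : P m b c') :
    P (m + n) a c' := by
  unfold P at *
  rw [Function.iterate_add_apply, h1]
  exact h2

lemma clean_evals : ∀ (N : ℕ) (i : List ITLetter) (c t : ℕ), i.length + c + t ≤ N →
    ∃ n ≤ N + 1, P n (cfgClean i c t) (cfgHalt false) := by
  intro N
  induction N with
  | zero =>
    intro i c t h
    have hi : i = [] := by cases i <;> simp_all
    have hc : c = 0 := by omega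
    have ht : t = 0 := by omega
    subst hi; subst hc; subst ht
    exact ⟨1, le_refl _, P_step step_clean_done (P_refl _)⟩
  | succ N ih =>
    intro i c t h
    by_cases hz : i = [] ∧ c = 0 ∧ t = 0
    · obtain ⟨rfl, rfl, rfl⟩ := hz
      exact ⟨1, by omega, P_step step_clean_done (P_refl _)⟩
    · have hlen : i.tail.length + (c - 1) + (t - 1) ≤ N := by
        rcases i with _ | ⟨y, i'⟩ <;> simp_all <;> omega
      obtain ⟨n, hn, hp⟩ := ih i.tail (c - 1) (t - 1) hlen
      exact ⟨n + 1, by omega, P_step (step_clean_go i c t hz) hp⟩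

lemma restore_evals (x : ITLetter) (i : List ITLetter) :
    ∀ (t c : ℕ), P t (cfgRestore x i c t) (cfgRestore x i (c + t) 0) := by
  intro t
  induction t with
  | zero => intro c; exact P_refl _
  | succ t ih =>
    intro c
    have := ih (c + 1)
    rw [show c + 1 + t = c + (t + 1) by omega] at this
    exact P_step (step_restore_pos x i c t) this

lemma main_evals : ∀ (rest : List ITLetter) (c k : ℕ),
    ∃ n ≤ 4 * rest.length + c + 2 * k + 5,
      P n (cfgMain rest c k) (cfgHalt (loop rest c k)) := by
  intro rest
  induction rest with
  | nil =>
    intro c k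
    obtain ⟨n, hn, hp⟩ := clean_evals (c + k) [] c k (by simp)
    exact ⟨n + 1, by omega, P_step (step_main_nil c k) hp⟩
  | cons x rest' ih =>
    intro c k
    cases x with
    | t =>
      rcases c with _ | c
      · obtain ⟨n, hn, hp⟩ := clean_evals (rest'.length + k) rest' 0 k (by omega)
        refine ⟨n + 1, by simp; omega, P_step (step_main_t_zero rest' k) ?_⟩
        rw [show loop (ITLetter.t :: rest') 0 k = false from by simp [loop]]
        exact hp
      · obtain ⟨n, hn, hp⟩ := ih c (k + 1)
        refine ⟨n + 1, by simp; omega, P_step (step_main_t_pos rest' c k) ?_⟩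
        rw [show loop (ITLetter.t :: rest') (c + 1) k = loop rest' c (k + 1) from by
          simp [loop]]
        exact hp
    | m =>
      obtain ⟨n, hn, hp⟩ := ih (c + k + 1) 0
      refine ⟨n + k + 2, by simp; omega, P_step (step_main_letter _ _ _ _ (by simp)) ?_⟩
      have h1 := restore_evals ITLetter.m rest' k c
      have h2 : P (n + 1) (cfgRestore ITLetter.m rest' (c + k) 0)
          (cfgHalt (loop rest' (c + k + 1) 0)) := P_step (step_restore_m rest' (c + k)) hp
      have := P_trans h1 h2
      rw [show n + 1 + k = n + k + 1 by omega] at this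
      exact this
    | l =>
      obtain ⟨n, hn, hp⟩ := ih (c + k) 0
      refine ⟨n + k + 2, by simp; omega, P_step (step_main_letter _ _ _ _ (by simp)) ?_⟩
      have h1 := restore_evals ITLetter.l rest' k c
      have h2 : P (n + 1) (cfgRestore ITLetter.l rest' (c + k) 0)
          (cfgHalt (loop rest' (c + k) 0)) := P_step (step_restore_l rest' (c + k)) hp
      have := P_trans h1 h2
      rw [show n + 1 + k = n + k + 1 by omega] at this
      exact this
    | r =>
      obtain ⟨n, hn, hp⟩ := ih (c + k) 0
      refine ⟨n + k + 2, by simp; omega, P_step (step_main_letter _ _ _ _ (by simp)) ?_⟩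
      have h1 := restore_evals ITLetter.r rest' k c
      have h2 : P (n + 1) (cfgRestore ITLetter.r rest' (c + k) 0)
          (cfgHalt (loop rest' (c + k) 0)) := P_step (step_restore_r rest' (c + k)) hp
      have := P_trans h1 h2
      rw [show n + 1 + k = n + k + 1 by omega] at this
      exact this
    | f =>
      rcases hck : c + k with _ | d
      · -- c = k = 0
        have hc : c = 0 := by omega
        have hk : k = 0 := by omega
        subst hc; subst hk
        rcases rest' with _ | ⟨y, rest''⟩
        · refine ⟨2, by simp, P_step (step_main_letter _ _ _ _ (by simp)) ?_⟩
          rw [show loop [ITLetter.f] 0 0 = true from by simp [loop]]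
          exact P_step step_restore_f_zero_nil (P_refl _)
        · obtain ⟨n, hn, hp⟩ := clean_evals rest''.length rest'' 0 0 (by omega)
          refine ⟨n + 2, by simp; omega, P_step (step_main_letter _ _ _ _ (by simp)) ?_⟩
          rw [show loop (ITLetter.f :: y :: rest'') 0 0 = false from by simp [loop]]
          exact P_step (step_restore_f_zero_cons y rest'') hp
      · obtain ⟨n, hn, hp⟩ := ih d 0
        refine ⟨n + k + 2, by simp; omega, P_step (step_main_letter _ _ _ _ (by simp)) ?_⟩
        have h1 := restore_evals ITLetter.f rest' k c
        rw [hck] at h1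
        have h2 : P (n + 1) (cfgRestore ITLetter.f rest' (d + 1) 0)
            (cfgHalt (loop (ITLetter.f :: rest') c k)) := by
          rw [show loop (ITLetter.f :: rest') c k = loop rest' d 0 from by
            simp [loop, hck]]
          exact P_step (step_restore_f_pos rest' d) hp
        have := P_trans h1 h2
        rw [show n + 1 + k = n + k + 1 by omega] at this
        exact this

lemma initList_eq (w : List ITLetter) :
    Turing.initList itTM w = cfgMain w 0 0 := by
  show Turing.TM2.Cfg.mk _ _ _ = Turing.TM2.Cfg.mk _ _ _
  congr 1
  funext k
  cases k <;> rfl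

lemma haltList_eq (b : Bool) :
    Turing.haltList itTM [b] = cfgHalt b := by
  show Turing.TM2.Cfg.mk _ _ _ = Turing.TM2.Cfg.mk _ _ _
  congr 1
  funext k
  cases k <;> rfl

end ITProof

/-- The characteristic function of the set `E` of legal it-codewords is
computable by a Turing machine in polynomial time. -/
theorem legal_codewords_computable_in_polyTime :
    Nonempty (Turing.TM2ComputableInPolyTime itFinEncoding.encode
      Computability.encodingBoolBool.encode (fun w => decide (ITLegal w))) := by
  refine ⟨{ tm := ITProof.itTM,
            inputAlphabet := Equiv.refl _,
            outputAlphabet := Equiv.refl _,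
            time := 4 * Polynomial.X + 5,
            outputsFun := ?_ }⟩
  intro w
  have hme := ITProof.main_evals w 0 0
  set n := hme.choose with hndef
  have hn : n ≤ 4 * w.length + 0 + 2 * 0 + 5 := hme.choose_spec.1
  have hp : ITProof.P n (ITProof.cfgMain w 0 0)
      (ITProof.cfgHalt (ITProof.loop w 0 0)) := hme.choose_spec.2
  rw [ITProof.legal_eq_loop w]
  refine ⟨⟨n, ?_⟩, ?_⟩
  · show (flip bind ITProof.mstep)^[n] _ = _
    dsimp only [Option.map_some]
    show (flip bind ITProof.mstep)^[n]
        (some (Turing.initList ITProof.itTM (List.map (⇑(Equiv.refl ITLetter)) w))) =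
      some (Turing.haltList ITProof.itTM
        (List.map (⇑(Equiv.refl Bool)) [ITProof.loop w 0 0]))
    simp only [Equiv.coe_refl]
    erw [List.map_id, List.map_id]
    rw [ITProof.initList_eq]
    erw [ITProof.haltList_eq]
    exact hp
  · show n ≤ Polynomial.eval (itFinEncoding.encode w).length (4 * Polynomial.X + 5)
    have : (itFinEncoding.encode w).length = w.length := rfl
    rw [this]
    simp only [Polynomial.eval_add, Polynomial.eval_mul, Polynomial.eval_ofNat,
      Polynomial.eval_X]
    omega
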